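/- Let γ be the standard Gaussian probability measure on ℝ (mean 0, variance 1). Then every polynomial function lies in L²(γ), and the linear span of the monomial functions x ↦ xⁿ, n ∈ ℕ, is dense in the real Hilbert space L²(γ). Consequently the Hermite polynomials, being the orthogonal polynomials of γ, form a complete orthogonal basis of L²(γ), so every square-integrable functional of a standard Gaussian germ is the mean-square limit of its truncated Wiener–Hermite polynomial chaos expansions. -/

import Mathlib

open MeasureTheory ProbabilityTheory

namespace CameronMartinAux

open MeasureTheory ProbabilityTheory Real Set Filter Finset Nat Topology

set_option maxHeartbeats 1000000

noncomputable section

local notation "γ" => gaussianReal 0 1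

variable {g : ℝ → ℝ}




lemma CM.integrable_exp_mul (c : ℝ) : Integrable (fun x => Real.exp (c * x)) γ := by
  rw [gaussianReal_of_var_ne_zero 0 one_ne_zero,
    integrable_withDensity_iff (measurable_gaussianPDF 0 1)
      (Filter.Eventually.of_forall fun x => ENNReal.ofReal_lt_top)]
  have heq : (fun x => Real.exp (c * x) * (gaussianPDF 0 1 x).toReal)
      = fun x => (Real.exp (c ^ 2 / 2) * (Real.sqrt (2 * π))⁻¹) *
        Real.exp (-(2⁻¹ : ℝ) * (x - c) ^ 2) := by
    funext x
    rw [gaussianPDF, ENNReal.toReal_ofReal (gaussianPDFReal_nonneg 0 1 x), gaussianPDFReal]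
    rw [mul_comm (Real.exp (c * x)), mul_assoc, mul_comm _ ((Real.sqrt _)⁻¹)]
    push_cast
    ring_nf
    rw [mul_assoc, mul_assoc, ← Real.exp_add, ← Real.exp_add]
    congr 1
    ring
  rw [heq]
  exact ((integrable_exp_neg_mul_sq (by norm_num : (0:ℝ) < 2⁻¹)).comp_sub_right c).const_mul _

lemma CM.integrable_exp_abs (c : ℝ) : Integrable (fun x => Real.exp (c * |x|)) γ := by
  have hc : Continuous fun x : ℝ => Real.exp (c * |x|) := by continuity
  refine (((CM.integrable_exp_mul c).add (CM.integrable_exp_mul (-c))).mono'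
    hc.aestronglyMeasurable (Filter.Eventually.of_forall fun x => ?_))
  · rw [Real.norm_eq_abs, abs_of_pos (Real.exp_pos _)]
    simp only [Pi.add_apply]
    rcases abs_choice x with h | h
    · rw [h]; linarith [Real.exp_pos (-c * x)]
    · rw [h]
      have h2 : c * -x = -c * x := by ring
      rw [h2]
      linarith [Real.exp_pos (c * x)]

lemma CM.memℒp_exp_abs (c : ℝ) : MemLp (fun x => Real.exp (c * |x|)) 2 γ := by
  have hc : Continuous fun x : ℝ => Real.exp (c * |x|) := by continuity
  rw [memLp_two_iff_integrable_sq hc.aestronglyMeasurable]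
  have : (fun x : ℝ => Real.exp (c * |x|) ^ 2) = fun x => Real.exp ((2 * c) * |x|) := by
    funext x; rw [← Real.exp_nat_mul]; ring_nf
  rw [this]
  exact CM.integrable_exp_abs (2 * c)

lemma CM.pow_le_exp {x : ℝ} (hx : 0 ≤ x) (n : ℕ) : x ^ n ≤ (n ! : ℝ) * Real.exp x := by
  have h1 : x ^ n / n ! ≤ Real.exp x := by
    calc x ^ n / n ! ≤ ∑ i ∈ Finset.range (n + 1), x ^ i / i ! := by
          refine Finset.single_le_sum (f := fun i => x ^ i / i !) (fun i _ => by positivity) ?_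
          simp
      _ ≤ Real.exp x := Real.sum_le_exp_of_nonneg hx _
  have hn : (0:ℝ) < n ! := by positivity
  calc x ^ n = (x ^ n / n !) * n ! := by field_simp
    _ ≤ Real.exp x * n ! := by apply mul_le_mul_of_nonneg_right h1 hn.le
    _ = n ! * Real.exp x := by ring

lemma CM.memℒp_monomial (n : ℕ) : MemLp (fun x : ℝ => x ^ n) 2 γ := by
  rw [memLp_two_iff_integrable_sq (continuous_pow n).aestronglyMeasurable]
  refine ((CM.integrable_exp_abs 1).const_mul ((2*n).factorial : ℝ)).mono'
    ((continuous_pow n).pow 2).aestronglyMeasurable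
    (Filter.Eventually.of_forall fun x => ?_)
  have : (x ^ n) ^ 2 = |x| ^ (2 * n) := by
    rw [pow_mul, sq_abs]; ring
  rw [Real.norm_eq_abs, abs_of_nonneg (by positivity : (0:ℝ) ≤ (x ^ n) ^ 2), this, one_mul]
  exact CM.pow_le_exp (abs_nonneg x) (2 * n)

lemma CM.memℒp_poly (p : Polynomial ℝ) : MemLp (fun x => p.eval x) 2 γ := by
  have : (fun x => p.eval x)
      = ∑ i ∈ Finset.range (p.natDegree + 1), (fun x => p.coeff i * x ^ i) := by
    funext x; simp only [Finset.sum_apply]; exact Polynomial.eval_eq_sum_range x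
  rw [this]
  exact memLp_finset_sum' _ fun i _ => (CM.memℒp_monomial i).const_mul _

lemma CM.integrable_mul {f g : ℝ → ℝ} (hf : MemLp f 2 γ) (hg : MemLp g 2 γ) :
    Integrable (fun x => f x * g x) γ := by
  rw [← memLp_one_iff_integrable]
  exact MemLp.smul (r := 1) hg hf (hpqr := ⟨by norm_num [ENNReal.inv_two_add_inv_two]⟩)



lemma CM.sum_even_le {y : ℝ} (hy : 0 ≤ y) (n : ℕ) :
    ∑ k ∈ Finset.range n, y ^ (2*k) / (2*k)! ≤ Real.exp y := by
  calc ∑ k ∈ Finset.range n, y ^ (2*k) / (2*k)!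
      = ∑ j ∈ (Finset.range n).image (fun k => 2*k), y ^ j / j ! := by
        rw [Finset.sum_image (by intro a _ b _ h; simp only at h; omega)]
    _ ≤ ∑ j ∈ Finset.range (2*n), y ^ j / j ! := by
        refine Finset.sum_le_sum_of_subset_of_nonneg ?_ (fun i _ _ => by positivity)
        intro j hj; simp only [Finset.mem_image, Finset.mem_range] at hj ⊢; omega
    _ ≤ Real.exp y := Real.sum_le_exp_of_nonneg hy _

lemma CM.sum_odd_le {y : ℝ} (hy : 0 ≤ y) (n : ℕ) :
    ∑ k ∈ Finset.range n, y ^ (2*k+1) / (2*k+1)! ≤ Real.exp y := by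
  calc ∑ k ∈ Finset.range n, y ^ (2*k+1) / (2*k+1)!
      = ∑ j ∈ (Finset.range n).image (fun k => 2*k+1), y ^ j / j ! := by
        rw [Finset.sum_image (by intro a _ b _ h; simp only at h; omega)]
    _ ≤ ∑ j ∈ Finset.range (2*n+1), y ^ j / j ! := by
        refine Finset.sum_le_sum_of_subset_of_nonneg ?_ (fun i _ _ => by positivity)
        intro j hj; simp only [Finset.mem_image, Finset.mem_range] at hj ⊢; omega
    _ ≤ Real.exp y := Real.sum_le_exp_of_nonneg hy _

lemma CM.integral_cos {g : ℝ → ℝ} (hg : MemLp g 2 γ)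
    (H : ∀ n : ℕ, ∫ x, x ^ n * g x ∂γ = 0) (a : ℝ) :
    ∫ x, Real.cos (a * x) * g x ∂γ = 0 := by
  set F : ℕ → ℝ → ℝ := fun n x =>
    ∑ k ∈ Finset.range n, ((-1:ℝ)^k * a^(2*k) / (2*k)!) * (x^(2*k) * g x) with hF
  have hint : ∀ k : ℕ, Integrable (fun x => x^(2*k) * g x) γ :=
    fun k => CM.integrable_mul (CM.memℒp_monomial _) hg
  have hF0 : ∀ n, ∫ x, F n x ∂γ = 0 := by
    intro n
    rw [hF, integral_finset_sum _ (fun k _ => ((hint k).const_mul _))]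
    simp_rw [integral_const_mul, H, mul_zero, Finset.sum_const_zero]
  have hmeas : ∀ n, AEStronglyMeasurable (F n) γ := by
    intro n
    refine Finset.aestronglyMeasurable_fun_sum _ (fun k _ => ?_)
    exact (((continuous_pow (2*k)).aestronglyMeasurable.mul hg.1).const_mul _)
  have hbound : ∀ n, ∀ᵐ x ∂γ, ‖F n x‖ ≤ Real.exp (|a| * |x|) * |g x| := by
    intro n
    refine Eventually.of_forall fun x => ?_
    calc ‖F n x‖ ≤ ∑ k ∈ Finset.range n, ‖((-1:ℝ)^k * a^(2*k) / (2*k)!) * (x^(2*k) * g x)‖ :=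
          norm_sum_le _ _
      _ = ∑ k ∈ Finset.range n, (|a| * |x|)^(2*k) / (2*k)! * |g x| := by
          refine Finset.sum_congr rfl fun k _ => ?_
          rw [Real.norm_eq_abs, abs_mul, abs_mul, abs_div, abs_mul, abs_pow, abs_pow, abs_pow,
            abs_neg, abs_one, one_pow, one_mul, abs_of_nonneg (by positivity : (0:ℝ) ≤ ((2*k)! : ℝ)),
            mul_pow]
          ring
      _ = (∑ k ∈ Finset.range n, (|a| * |x|)^(2*k) / (2*k)!) * |g x| := by
          rw [Finset.sum_mul]
      _ ≤ Real.exp (|a| * |x|) * |g x| := by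
          have := CM.sum_even_le (by positivity : (0:ℝ) ≤ |a| * |x|) n
          exact mul_le_mul_of_nonneg_right this (abs_nonneg _)
  have hbi : Integrable (fun x => Real.exp (|a| * |x|) * |g x|) γ :=
    CM.integrable_mul (CM.memℒp_exp_abs |a|) hg.norm
  have hlim : ∀ᵐ x ∂γ, Tendsto (fun n => F n x) atTop (𝓝 (Real.cos (a*x) * g x)) := by
    refine Eventually.of_forall fun x => ?_
    have h := ((Real.hasSum_cos (a*x)).mul_right (g x)).tendsto_sum_nat
    refine h.congr fun n => ?_
    refine Finset.sum_congr rfl fun k _ => ?_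
    rw [mul_pow]; ring
  have h1 := tendsto_integral_of_dominated_convergence _ hmeas hbi hbound hlim
  have h2 : Tendsto (fun n => ∫ x, F n x ∂γ) atTop (𝓝 (0:ℝ)) := by
    simp_rw [hF0]; exact tendsto_const_nhds
  exact (tendsto_nhds_unique h1 h2)

lemma CM.integral_sin {g : ℝ → ℝ} (hg : MemLp g 2 γ)
    (H : ∀ n : ℕ, ∫ x, x ^ n * g x ∂γ = 0) (a : ℝ) :
    ∫ x, Real.sin (a * x) * g x ∂γ = 0 := by
  set F : ℕ → ℝ → ℝ := fun n x =>
    ∑ k ∈ Finset.range n, ((-1:ℝ)^k * a^(2*k+1) / (2*k+1)!) * (x^(2*k+1) * g x) with hF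
  have hint : ∀ k : ℕ, Integrable (fun x => x^(2*k+1) * g x) γ :=
    fun k => CM.integrable_mul (CM.memℒp_monomial _) hg
  have hF0 : ∀ n, ∫ x, F n x ∂γ = 0 := by
    intro n
    rw [hF, integral_finset_sum _ (fun k _ => ((hint k).const_mul _))]
    simp_rw [integral_const_mul, H, mul_zero, Finset.sum_const_zero]
  have hmeas : ∀ n, AEStronglyMeasurable (F n) γ := by
    intro n
    refine Finset.aestronglyMeasurable_fun_sum _ (fun k _ => ?_)
    exact (((continuous_pow (2*k+1)).aestronglyMeasurable.mul hg.1).const_mul _)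
  have hbound : ∀ n, ∀ᵐ x ∂γ, ‖F n x‖ ≤ Real.exp (|a| * |x|) * |g x| := by
    intro n
    refine Eventually.of_forall fun x => ?_
    calc ‖F n x‖ ≤ ∑ k ∈ Finset.range n, ‖((-1:ℝ)^k * a^(2*k+1) / (2*k+1)!) * (x^(2*k+1) * g x)‖ :=
          norm_sum_le _ _
      _ = ∑ k ∈ Finset.range n, (|a| * |x|)^(2*k+1) / (2*k+1)! * |g x| := by
          refine Finset.sum_congr rfl fun k _ => ?_
          rw [Real.norm_eq_abs, abs_mul, abs_mul, abs_div, abs_mul, abs_pow, abs_pow, abs_pow,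
            abs_neg, abs_one, one_pow, one_mul,
            abs_of_nonneg (by positivity : (0:ℝ) ≤ ((2*k+1)! : ℝ)), mul_pow]
          ring
      _ = (∑ k ∈ Finset.range n, (|a| * |x|)^(2*k+1) / (2*k+1)!) * |g x| := by
          rw [Finset.sum_mul]
      _ ≤ Real.exp (|a| * |x|) * |g x| := by
          have := CM.sum_odd_le (by positivity : (0:ℝ) ≤ |a| * |x|) n
          exact mul_le_mul_of_nonneg_right this (abs_nonneg _)
  have hbi : Integrable (fun x => Real.exp (|a| * |x|) * |g x|) γ :=
    CM.integrable_mul (CM.memℒp_exp_abs |a|) hg.norm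
  have hlim : ∀ᵐ x ∂γ, Tendsto (fun n => F n x) atTop (𝓝 (Real.sin (a*x) * g x)) := by
    refine Eventually.of_forall fun x => ?_
    have h := ((Real.hasSum_sin (a*x)).mul_right (g x)).tendsto_sum_nat
    refine h.congr fun n => ?_
    refine Finset.sum_congr rfl fun k _ => ?_
    rw [mul_pow]; ring
  have h1 := tendsto_integral_of_dominated_convergence _ hmeas hbi hbound hlim
  have h2 : Tendsto (fun n => ∫ x, F n x ∂γ) atTop (𝓝 (0:ℝ)) := by
    simp_rw [hF0]; exact tendsto_const_nhds
  exact (tendsto_nhds_unique h1 h2)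

lemma CM.integrable_bdd_comp (hg : MemLp g 2 γ) {T : ℝ} [hT : Fact (0 < T)]
    (h : C(AddCircle T, ℂ)) :
    Integrable (fun x : ℝ => (h (x : AddCircle T)).re * g x) γ ∧
    Integrable (fun x : ℝ => (h (x : AddCircle T)).im * g x) γ := by
  have hgInt : Integrable g γ := memLp_one_iff_integrable.mp
    (hg.mono_exponent one_le_two)
  have hcont : Continuous fun x : ℝ => h (x : AddCircle T) :=
    h.continuous.comp (AddCircle.continuous_mk' T)
  constructor
  · refine hgInt.bdd_mul (Complex.continuous_re.comp hcont).aestronglyMeasurable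
      (c := ‖h‖) (Eventually.of_forall fun x => ?_)
    exact le_trans (by exact_mod_cast Complex.abs_re_le_norm _) (h.norm_coe_le_norm _)
  · refine hgInt.bdd_mul (Complex.continuous_im.comp hcont).aestronglyMeasurable
      (c := ‖h‖) (Eventually.of_forall fun x => ?_)
    exact le_trans (by exact_mod_cast Complex.abs_im_le_norm _) (h.norm_coe_le_norm _)

lemma CM.integral_fourier_span (hg : MemLp g 2 γ)
    (H : ∀ n : ℕ, ∫ x, x ^ n * g x ∂γ = 0) {T : ℝ} [hT : Fact (0 < T)]
    (ψ : C(AddCircle T, ℂ)) (hψ : ψ ∈ Submodule.span ℂ (Set.range (@fourier T))) :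
    (∫ x : ℝ, (ψ (x : AddCircle T)).re * g x ∂γ = 0) ∧
    (∫ x : ℝ, (ψ (x : AddCircle T)).im * g x ∂γ = 0) := by
  induction hψ using Submodule.span_induction with
  | mem h hmem =>
    obtain ⟨n, rfl⟩ := hmem
    have key : ∀ x : ℝ, fourier n (x : AddCircle T)
        = Complex.exp ((((2 * π * n / T) * x : ℝ) : ℂ) * Complex.I) := by
      intro x
      rw [fourier_coe_apply]
      congr 1
      push_cast
      ring
    constructor
    · have : (fun x : ℝ => (fourier n (x : AddCircle T)).re * g x)
          = fun x => Real.cos ((2 * π * n / T) * x) * g x := by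
        funext x; rw [key x, Complex.exp_ofReal_mul_I_re]
      rw [this]; exact CM.integral_cos hg H _
    · have : (fun x : ℝ => (fourier n (x : AddCircle T)).im * g x)
          = fun x => Real.sin ((2 * π * n / T) * x) * g x := by
        funext x; rw [key x, Complex.exp_ofReal_mul_I_im]
      rw [this]; exact CM.integral_sin hg H _
  | zero => simp
  | add h₁ h₂ hm₁ hm₂ ih₁ ih₂ =>
    have i₁ := CM.integrable_bdd_comp hg (T := T) h₁
    have i₂ := CM.integrable_bdd_comp hg (T := T) h₂
    constructor
    · have : (fun x : ℝ => ((h₁ + h₂) (x : AddCircle T)).re * g x)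
          = fun x : ℝ => (h₁ (x : AddCircle T)).re * g x + (h₂ (x : AddCircle T)).re * g x := by
        funext x; simp [add_mul]
      rw [this, integral_add i₁.1 i₂.1, ih₁.1, ih₂.1, add_zero]
    · have : (fun x : ℝ => ((h₁ + h₂) (x : AddCircle T)).im * g x)
          = fun x : ℝ => (h₁ (x : AddCircle T)).im * g x + (h₂ (x : AddCircle T)).im * g x := by
        funext x; simp [add_mul]
      rw [this, integral_add i₁.2 i₂.2, ih₁.2, ih₂.2, add_zero]
  | smul c h hm ih =>
    have i := CM.integrable_bdd_comp hg (T := T) h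
    constructor
    · have : (fun x : ℝ => ((c • h) (x : AddCircle T)).re * g x)
          = fun x : ℝ => c.re * ((h (x : AddCircle T)).re * g x)
            - c.im * ((h (x : AddCircle T)).im * g x) := by
        funext x; simp [Complex.mul_re]; ring
      rw [this, integral_sub ((i.1).const_mul _) ((i.2).const_mul _),
        integral_const_mul, integral_const_mul, ih.1, ih.2]
      ring
    · have : (fun x : ℝ => ((c • h) (x : AddCircle T)).im * g x)
          = fun x : ℝ => c.re * ((h (x : AddCircle T)).im * g x)
            + c.im * ((h (x : AddCircle T)).re * g x) := by
        funext x; simp [Complex.mul_im]; ring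
      rw [this, integral_add ((i.2).const_mul _) ((i.1).const_mul _),
        integral_const_mul, integral_const_mul, ih.1, ih.2]
      ring

lemma CM.tail_tendsto (hg : MemLp g 2 γ) :
    Tendsto (fun N : ℕ => ∫ x in (Ico (-(N:ℝ)) (N:ℝ))ᶜ, |g x| ∂γ) atTop (𝓝 0) := by
  have hgi : Integrable (fun x => |g x|) γ :=
    (memLp_one_iff_integrable.mp (hg.mono_exponent one_le_two)).abs
  have hmono : Monotone fun N : ℕ => Ico (-(N:ℝ)) (N:ℝ) := by
    intro m n hmn
    refine Ico_subset_Ico ?_ ?_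
    · simp only [neg_le_neg_iff]; exact_mod_cast hmn
    · exact_mod_cast hmn
  have hunion : (⋃ N : ℕ, Ico (-(N:ℝ)) (N:ℝ)) = Set.univ := by
    ext x
    simp only [Set.mem_iUnion, Set.mem_Ico, Set.mem_univ, iff_true]
    obtain ⟨N, hN⟩ := exists_nat_gt |x|
    rcases abs_lt.mp hN with ⟨h1, h2⟩
    exact ⟨N, by linarith, h2⟩
  have h1 := tendsto_setIntegral_of_monotone (fun N => measurableSet_Ico) hmono
    hgi.integrableOn
  rw [hunion, setIntegral_univ] at h1
  have heq : ∀ N : ℕ, ∫ x in (Ico (-(N:ℝ)) (N:ℝ))ᶜ, |g x| ∂γ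
      = (∫ x, |g x| ∂γ) - ∫ x in Ico (-(N:ℝ)) (N:ℝ), |g x| ∂γ := by
    intro N
    rw [← integral_add_compl measurableSet_Ico hgi]
    ring
  simp_rw [heq]
  have h2 := h1.const_sub (∫ x, |g x| ∂γ)
  simpa using h2

lemma CM.integral_testfn (hg : MemLp g 2 γ)
    (H : ∀ n : ℕ, ∫ x, x ^ n * g x ∂γ = 0) (u : ℝ → ℝ)
    (huc : Continuous u) (hus : HasCompactSupport u) :
    ∫ x, u x * g x ∂γ = 0 := by
  have hgInt : Integrable g γ := memLp_one_iff_integrable.mp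
    (hg.mono_exponent one_le_two)
  have hgabs : Integrable (fun x => |g x|) γ := hgInt.abs
  -- bound on u
  obtain ⟨C, hC⟩ : ∃ C : ℝ, ∀ x, |u x| ≤ C := by
    obtain ⟨C, hC⟩ := (hus.isCompact.image huc.abs).bddAbove
    exact ⟨max C 0, fun x => by
      by_cases hx : x ∈ tsupport u
      · exact le_max_of_le_left (hC (Set.mem_image_of_mem _ hx))
      · simp [image_eq_zero_of_notMem_tsupport hx]⟩
  have hC0 : 0 ≤ C := le_trans (abs_nonneg _) (hC 0)
  -- compact support inside a ball
  obtain ⟨L₀, hL₀⟩ : ∃ L₀ : ℕ, tsupport u ⊆ Icc (-(L₀:ℝ)) (L₀:ℝ) := by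
    obtain ⟨r, hr⟩ := hus.isCompact.isBounded.subset_closedBall 0
    refine ⟨⌈r⌉₊, fun x hx => ?_⟩
    have := hr hx
    rw [Metric.mem_closedBall, Real.dist_eq, sub_zero] at this
    have hrc : r ≤ (⌈r⌉₊ : ℝ) := Nat.le_ceil r
    rcases abs_le.mp this with ⟨h1, h2⟩
    exact ⟨by linarith, by linarith⟩
  set I := ∫ x, u x * g x ∂γ with hI
  set K := (∫ x, |g x| ∂γ) + 2 * C + 1 with hK
  have hK0 : 0 ≤ K := by
    have : 0 ≤ ∫ x, |g x| ∂γ := integral_nonneg (μ := γ) fun x => abs_nonneg _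
    simp only [hK]; linarith
  have key : ∀ ε : ℝ, 0 < ε → ε ≤ 1 → |I| ≤ ε * K := by
    intro ε hε hε1
    -- choose N large
    have hev := (CM.tail_tendsto hg).eventually (gt_mem_nhds hε)
    obtain ⟨N, hNtail, hNL⟩ := (hev.and (eventually_ge_atTop (L₀ + 1))).exists
    have hN1 : (1:ℕ) ≤ N := le_trans (Nat.le_add_left 1 L₀) hNL
    set T : ℝ := 2 * N with hTdef
    have hT : 0 < T := by
      simp only [hTdef]
      have : (0:ℝ) < N := by exact_mod_cast hN1
      linarith
    haveI : Fact (0 < T) := ⟨hT⟩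
    set a : ℝ := -(N:ℝ) with ha
    have haT : a + T = (N:ℝ) := by simp only [ha, hTdef]; ring
    -- u vanishes at a, a+T
    have hua : u a = 0 := by
      apply image_eq_zero_of_notMem_tsupport
      intro hmem
      have := hL₀ hmem
      rcases this with ⟨h1, h2⟩
      have : (L₀:ℝ) + 1 ≤ (N:ℝ) := by exact_mod_cast hNL
      simp only [ha] at h1 h2
      linarith
    have huaT : u (a + T) = 0 := by
      apply image_eq_zero_of_notMem_tsupport
      intro hmem
      rcases hL₀ hmem with ⟨h1, h2⟩
      have : (L₀:ℝ) + 1 ≤ (N:ℝ) := by exact_mod_cast hNL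
      rw [haT] at h2
      linarith
    -- lift to the circle
    set Φ : AddCircle T → ℝ := AddCircle.liftIco T a u with hΦdef
    have hΦcont : Continuous Φ :=
      AddCircle.liftIco_continuous (by rw [hua, huaT]) huc.continuousOn
    have hΦbdd : ∀ z, |Φ z| ≤ C := fun z => hC _
    set Φc : C(AddCircle T, ℂ) :=
      ⟨fun z => (Φ z : ℂ), Complex.continuous_ofReal.comp hΦcont⟩ with hΦc
    -- approximate by a trigonometric polynomial
    have hdense : Φc ∈ closure ((Submodule.span ℂ (Set.range (@fourier T)) : Submodule ℂ _) : Set C(AddCircle T, ℂ)) := by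
      have := span_fourier_closure_eq_top (T := T)
      rw [← Submodule.topologicalClosure_coe, this]
      trivial
    obtain ⟨ψ, hψmem, hψd⟩ := Metric.mem_closure_iff.mp hdense ε hε
    set R : ℝ → ℝ := fun x => (ψ (x : AddCircle T)).re with hR
    have hRcont : Continuous R :=
      Complex.continuous_re.comp (ψ.continuous.comp (AddCircle.continuous_mk' T))
    have habs_sub : ∀ u v : ℝ, |u - v| ≤ |u| + |v| := fun u v => by
      rw [sub_eq_add_neg]
      exact (abs_add_le _ _).trans (by rw [abs_neg])
    have hψnorm : ∀ z, |Φ z - (ψ z).re| ≤ ε := by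
      intro z
      have h1 : |Φ z - (ψ z).re| = |(Φc z - ψ z).re| := by
        simp [hΦc, Complex.sub_re]
      rw [h1]
      calc |(Φc z - ψ z).re| ≤ ‖Φc z - ψ z‖ := Complex.abs_re_le_norm _
        _ = ‖(Φc - ψ) z‖ := by simp
        _ ≤ ‖Φc - ψ‖ := ContinuousMap.norm_coe_le_norm _ _
        _ = dist Φc ψ := by rw [dist_eq_norm]
        _ ≤ ε := hψd.le
    have hclose : ∀ x ∈ Ico a (a + T), |u x - R x| ≤ ε := by
      intro x hx
      have he : Φ ((x : ℝ) : AddCircle T) = u x := AddCircle.liftIco_coe_apply hx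
      have h2 := hψnorm ((x : ℝ) : AddCircle T)
      rw [he] at h2
      exact h2
    have hRbdd : ∀ x : ℝ, |R x| ≤ C + ε := by
      intro x
      have h1 := hψnorm ((x : ℝ) : AddCircle T)
      have h2 := hΦbdd ((x : ℝ) : AddCircle T)
      have h3 : |R x| ≤ |Φ ((x:ℝ) : AddCircle T)| + |Φ ((x:ℝ) : AddCircle T) - R x| := by
        have := habs_sub (Φ ((x:ℝ) : AddCircle T)) (Φ ((x:ℝ) : AddCircle T) - R x)
        simp only [sub_sub_cancel] at this
        exact this
      calc |R x| ≤ |Φ ((x:ℝ) : AddCircle T)| + |Φ ((x:ℝ) : AddCircle T) - R x| := h3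
        _ ≤ C + ε := add_le_add h2 h1
    have hR0 : ∫ x, R x * g x ∂γ = 0 := (CM.integral_fourier_span hg H ψ hψmem).1
    have hint1 : Integrable (fun x => u x * g x) γ :=
      hgInt.bdd_mul huc.aestronglyMeasurable
        (c := C) (Eventually.of_forall fun x => by rw [Real.norm_eq_abs]; exact hC x)
    have hintR : Integrable (fun x => R x * g x) γ := (CM.integrable_bdd_comp hg ψ).1
    have hIeq : I = ∫ x, (u x - R x) * g x ∂γ := by
      rw [hI, show (fun x => (u x - R x) * g x) = fun x => u x * g x - R x * g x from
        funext fun x => by ring, integral_sub hint1 hintR, hR0, sub_zero]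
    have habsI : |I| ≤ ∫ x, |u x - R x| * |g x| ∂γ := by
      rw [hIeq, ← Real.norm_eq_abs]
      refine (norm_integral_le_integral_norm _).trans_eq ?_
      congr 1
      funext x
      rw [Real.norm_eq_abs, abs_mul]
    set s : Set ℝ := Ico a (a + T) with hs
    have hintfull : Integrable (fun x => |u x - R x| * |g x|) γ := by
      refine hgabs.bdd_mul (huc.sub hRcont).abs.aestronglyMeasurable
        (c := C + (C + ε)) (Eventually.of_forall fun x => ?_)
      rw [Real.norm_eq_abs, abs_abs]
      exact le_trans (habs_sub _ _) (add_le_add (hC x) (hRbdd x))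
    have hsplit : ∫ x, |u x - R x| * |g x| ∂γ
        = (∫ x in s, |u x - R x| * |g x| ∂γ) + ∫ x in sᶜ, |u x - R x| * |g x| ∂γ :=
      (integral_add_compl measurableSet_Ico hintfull).symm
    have hbound1 : ∫ x in s, |u x - R x| * |g x| ∂γ ≤ ε * ∫ x, |g x| ∂γ := by
      calc ∫ x in s, |u x - R x| * |g x| ∂γ ≤ ∫ x in s, ε * |g x| ∂γ := by
            refine setIntegral_mono_on hintfull.integrableOn
              (hgabs.const_mul ε).integrableOn measurableSet_Ico ?_
            intro x hx
            exact mul_le_mul_of_nonneg_right (hclose x hx) (abs_nonneg _)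
        _ = ε * ∫ x in s, |g x| ∂γ := integral_const_mul _ _
        _ ≤ ε * ∫ x, |g x| ∂γ := by
            refine mul_le_mul_of_nonneg_left ?_ hε.le
            exact setIntegral_le_integral hgabs (Filter.Eventually.of_forall fun x => abs_nonneg _)
    have hbound2 : ∫ x in sᶜ, |u x - R x| * |g x| ∂γ ≤ (2*C + ε) * ε := by
      calc ∫ x in sᶜ, |u x - R x| * |g x| ∂γ ≤ ∫ x in sᶜ, (2*C + ε) * |g x| ∂γ := by
            refine setIntegral_mono_on hintfull.integrableOn
              (hgabs.const_mul _).integrableOn measurableSet_Ico.compl ?_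
            intro x hx
            have h4 := add_le_add (hC x) (hRbdd x)
            have h3 : |u x - R x| ≤ 2*C + ε := le_trans (habs_sub _ _) (by linarith)
            exact mul_le_mul_of_nonneg_right h3 (abs_nonneg _)
        _ = (2*C+ε) * ∫ x in sᶜ, |g x| ∂γ := integral_const_mul _ _
        _ ≤ (2*C+ε) * ε := by
            refine mul_le_mul_of_nonneg_left ?_ (by linarith)
            have hseq : s = Ico (-(N:ℝ)) (N:ℝ) := by rw [hs, ← ha, ← haT]
            rw [hseq]
            exact hNtail.le
    calc |I| ≤ ∫ x, |u x - R x| * |g x| ∂γ := habsI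
      _ ≤ ε * ∫ x, |g x| ∂γ + (2*C + ε)*ε := by
          rw [hsplit]; exact add_le_add hbound1 hbound2
      _ ≤ ε * K := by
          rw [hK]
          nlinarith [integral_nonneg (μ := γ) (f := fun x => |g x|) (fun x : ℝ => abs_nonneg (g x)),
            mul_nonneg hε.le (sub_nonneg.mpr hε1)]
  by_contra hne
  have hIpos : 0 < |I| := abs_pos.mpr hne
  set ε₀ := min 1 (|I| / (2 * (K+1))) with hε₀
  have hKpos : 0 < K + 1 := by linarith
  have hε₀pos : 0 < ε₀ := lt_min one_pos (by positivity)
  have h1 : |I| ≤ ε₀ * K := key ε₀ hε₀pos (min_le_left _ _)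
  have h2 : ε₀ ≤ |I| / (2*(K+1)) := min_le_right _ _
  have h5 : ε₀ * K ≤ (|I| / (2*(K+1))) * K := mul_le_mul_of_nonneg_right h2 hK0
  have hlt : (|I| / (2*(K+1))) * K < |I| := by
    rw [div_mul_eq_mul_div, div_lt_iff₀ (by linarith)]
    nlinarith [mul_pos hIpos (by linarith : (0:ℝ) < K + 2)]
  exact lt_irrefl _ (lt_of_le_of_lt (h1.trans h5) hlt)

lemma CM.ae_zero (hg : MemLp g 2 γ) (H : ∀ n : ℕ, ∫ x, x ^ n * g x ∂γ = 0) :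
    g =ᵐ[γ] 0 := by
  have hgInt : Integrable g γ := memLp_one_iff_integrable.mp
    (hg.mono_exponent one_le_two)
  have h := ae_eq_zero_of_integral_contDiff_smul_eq_zero hgInt.locallyIntegrable
    (fun u hu hsupp => CM.integral_testfn hg H u hu.continuous hsupp)
  filter_upwards [h] with x hx using hx


end

end CameronMartinAux

open CameronMartinAux in
set_option maxHeartbeats 1000000 in
/-- Theorem (Cameron–Martin completeness of the Wiener–Hermite basis): every
polynomial function lies in `L²` of the standard Gaussian measure `γ` on `ℝ`,
and the polynomial functions (the span of the monomials) are dense in `L²(γ)`: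
every square-integrable functional of a standard Gaussian germ is the mean-square
limit of polynomials. Hence the Hermite polynomials, being the orthogonal
polynomials of `γ`, form a complete orthogonal basis of `L²(γ)`. -/
theorem hermite_basis_complete :
    (∀ p : Polynomial ℝ, MemLp (fun x => p.eval x) 2 (gaussianReal 0 1)) ∧
    (∀ f : ℝ → ℝ, MemLp f 2 (gaussianReal 0 1) → ∀ ε : ℝ, 0 < ε →
      ∃ p : Polynomial ℝ,
        eLpNorm (fun x => f x - p.eval x) 2 (gaussianReal 0 1) < ENNReal.ofReal ε) := by

  constructor
  · exact CM.memℒp_poly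
  · intro f hf ε hε
    set P : Submodule ℝ (Lp ℝ 2 (gaussianReal 0 1)) :=
      Submodule.span ℝ (Set.range fun n : ℕ => ((CM.memℒp_monomial n).toLp _)) with hP
    have hPbot : Pᗮ = ⊥ := by
      rw [Submodule.eq_bot_iff]
      intro y hy
      have hyM : MemLp (⇑y) 2 (gaussianReal 0 1) := Lp.memLp y
      have hOrth : ∀ n : ℕ, ∫ x, x ^ n * y x ∂(gaussianReal 0 1) = 0 := by
        intro n
        have h1 := (Submodule.mem_orthogonal _ _).mp hy ((CM.memℒp_monomial n).toLp _)
          (Submodule.subset_span ⟨n, rfl⟩)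
        rw [L2.inner_def] at h1
        refine Eq.trans (integral_congr_ae ?_) h1
        filter_upwards [(CM.memℒp_monomial n).coeFn_toLp] with x hx
        simp only [RCLike.inner_apply, conj_trivial, hx, mul_comm]
      have hzero := CM.ae_zero hyM hOrth
      exact (Lp.eq_zero_iff_ae_eq_zero).mpr hzero
    have hdense : P.topologicalClosure = ⊤ :=
      Submodule.topologicalClosure_eq_top_iff.mpr hPbot
    have hmem : hf.toLp f ∈ closure (P : Set (Lp ℝ 2 (gaussianReal 0 1))) := by
      rw [← Submodule.topologicalClosure_coe, hdense]
      trivial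
    obtain ⟨y, hyP, hyd⟩ := Metric.mem_closure_iff.mp hmem ε hε
    have hrep : ∃ p : Polynomial ℝ, y = (CM.memℒp_poly p).toLp _ := by
      clear hyd
      induction hyP using Submodule.span_induction with
      | mem z hz =>
        obtain ⟨n, rfl⟩ := hz
        refine ⟨Polynomial.X ^ n, ?_⟩
        exact (MemLp.toLp_congr _ _ (Filter.Eventually.of_forall fun x => by simp)).symm
      | zero =>
        refine ⟨0, ?_⟩
        exact ((MemLp.toLp_congr (CM.memℒp_poly 0) MemLp.zero
          (Filter.Eventually.of_forall fun x => by simp)).trans (MemLp.toLp_zero _)).symm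
      | add z w hz hw ihz ihw =>
        obtain ⟨p, rfl⟩ := ihz
        obtain ⟨q, rfl⟩ := ihw
        refine ⟨p + q, ?_⟩
        have h2 : (CM.memℒp_poly (p + q)).toLp _
            = ((CM.memℒp_poly p).add (CM.memℒp_poly q)).toLp
              ((fun x => Polynomial.eval x p) + fun x => Polynomial.eval x q) :=
          MemLp.toLp_congr _ _ (Filter.Eventually.of_forall fun x => by simp)
        rw [h2, MemLp.toLp_add]
      | smul c z hz ihz =>
        obtain ⟨p, rfl⟩ := ihz
        refine ⟨c • p, ?_⟩
        have h2 : (CM.memℒp_poly (c • p)).toLp _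
            = ((CM.memℒp_poly p).const_smul c).toLp (c • fun x => Polynomial.eval x p) :=
          MemLp.toLp_congr _ _ (Filter.Eventually.of_forall fun x => by simp)
        rw [h2, MemLp.toLp_const_smul]
    obtain ⟨p, rfl⟩ := hrep
    refine ⟨p, ?_⟩
    have h1 : eLpNorm (fun x => f x - p.eval x) 2 (gaussianReal 0 1)
        = eLpNorm (⇑(hf.toLp f - (CM.memℒp_poly p).toLp _)) 2 (gaussianReal 0 1) := by
      refine eLpNorm_congr_ae ?_
      filter_upwards [Lp.coeFn_sub (hf.toLp f) ((CM.memℒp_poly p).toLp _),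
        hf.coeFn_toLp, (CM.memℒp_poly p).coeFn_toLp] with x hx h2 h3
      rw [hx, Pi.sub_apply, h2, h3]
    rw [h1, ← ENNReal.ofReal_toReal (Lp.eLpNorm_ne_top
      (hf.toLp f - (CM.memℒp_poly p).toLp _)), ← Lp.norm_def]
    refine (ENNReal.ofReal_lt_ofReal_iff hε).mpr ?_
    rw [← dist_eq_norm]
    exact hyd
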